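/- Let n ≥ 4 with n ≡ 1 (mod 3) and let H_n be the complete multipartite graph with one part of size 4 and (n-4)/3 parts of size 3, and let G_n be the graph obtained from H_n by adding a 4-cycle within the part of size 4. Then H_n and G_n are non-isomorphic graphs on n vertices that both have exactly 4·3^{(n-4)/3} maximal cliques. -/

import Mathlib

open SimpleGraph

/-- `s` is a maximal clique of the simple graph `G`. -/
def MaxClique {V : Type*} (G : SimpleGraph V) (s : Set V) : Prop :=
  G.IsClique s ∧ ∀ t : Set V, G.IsClique t → s ⊆ t → s = t

/-- The graph obtained from `G` by adding the edge `(u,v)`. -/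
def addEdge {V : Type*} (G : SimpleGraph V) (u v : V) : SimpleGraph V :=
  G ⊔ SimpleGraph.fromEdgeSet {s(u, v)}

/-- The graph obtained from `G` by adding the set of edges `H`. -/
def addEdges {V : Type*} (G : SimpleGraph V) (H : Set (Sym2 V)) : SimpleGraph V :=
  G ⊔ SimpleGraph.fromEdgeSet H

/-- The number of maximal cliques of `G`. -/
noncomputable def numMaxCliques {V : Type*} (G : SimpleGraph V) : ℕ :=
  Nat.card {s : Set V // MaxClique G s}

/-- `f k`: the maximum possible number of maximal cliques in a graph on `k` vertices. -/
noncomputable def maxNumMaxCliques (k : ℕ) : ℕ :=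
  sSup {m | ∃ G : SimpleGraph (Fin k), m = numMaxCliques G}

/-- Index of the part containing vertex `i`: part 0 is `{0,1,2,3}`, then triples. -/
def part (n : ℕ) (i : Fin n) : ℕ := if (i : ℕ) < 4 then 0 else ((i : ℕ) - 4) / 3 + 1

/-- Adjacency in a 4-cycle on `{0,1,2,3}`. -/
def cyc4 (a b : ℕ) : Prop := (a + 1) % 4 = b % 4 ∨ (b + 1) % 4 = a % 4

/-- The complete multipartite graph with parts `S₀` of size 4 and triples,
    together with a 4-cycle added inside `S₀`. -/
def Gmm (n : ℕ) : SimpleGraph (Fin n) where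
  Adj i j := i ≠ j ∧ (part n i ≠ part n j ∨ ((i : ℕ) < 4 ∧ (j : ℕ) < 4 ∧ cyc4 i j))
  symm := by
    constructor; intro i j ⟨h1, h2⟩
    refine ⟨h1.symm, ?_⟩
    rcases h2 with h | ⟨hi, hj, hc⟩
    · exact Or.inl h.symm
    · exact Or.inr ⟨hj, hi, hc.symm⟩
  loopless := by constructor; intro i h; exact h.1 rfl

/-- The complete multipartite graph `H_n` with one part of size 4 and triples. -/
def Hmm (n : ℕ) : SimpleGraph (Fin n) where
  Adj i j := part n i ≠ part n j
  symm := by constructor; intro i j h; exact h.symm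
  loopless := by constructor; intro i h; exact h rfl

section Aux

@[simp] lemma Hmm_adj {n : ℕ} {v w : Fin n} : (Hmm n).Adj v w ↔ part n v ≠ part n w := Iff.rfl

@[simp] lemma Gmm_adj {n : ℕ} {v w : Fin n} :
    (Gmm n).Adj v w ↔ v ≠ w ∧ (part n v ≠ part n w ∨ ((v : ℕ) < 4 ∧ (w : ℕ) < 4 ∧ cyc4 v w)) :=
  Iff.rfl

/-- Encoding of maximal cliques of `Hmm`. -/
def encH (n m : ℕ) (x : Fin 4 × (Fin m → Fin 3)) : Set (Fin n) :=
  {v | (v : ℕ) = x.1 ∨ ∃ p : Fin m, (v : ℕ) = 4 + 3 * p + x.2 p}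

/-- Encoding of maximal cliques of `Gmm`. -/
def encG (n m : ℕ) (x : Fin 4 × (Fin m → Fin 3)) : Set (Fin n) :=
  {v | (v : ℕ) = x.1 ∨ (v : ℕ) = ((x.1 : ℕ) + 1) % 4 ∨ ∃ p : Fin m, (v : ℕ) = 4 + 3 * p + x.2 p}

lemma numMaxCliques_eq_of_bij {V X : Type*} {G : SimpleGraph V} (e : X → Set V)
    (h1 : ∀ x, MaxClique G (e x)) (h2 : Function.Injective e)
    (h3 : ∀ s, MaxClique G s → ∃ x, s = e x) :
    numMaxCliques G = Nat.card X := by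
  unfold numMaxCliques
  refine Nat.card_congr (Equiv.ofBijective (fun x => (⟨e x, h1 x⟩ : {s : Set V // MaxClique G s}))
    ⟨fun a b h => h2 (congrArg Subtype.val h), ?_⟩).symm
  rintro ⟨s, hs⟩
  obtain ⟨x, hx⟩ := h3 s hs
  exact ⟨x, by simp [hx]⟩

lemma mem_of_adj_all {V : Type*} {G : SimpleGraph V} {s : Set V} (hs : MaxClique G s) (w : V)
    (hw : ∀ v ∈ s, v ≠ w → G.Adj w v) : w ∈ s := by
  have hcl : G.IsClique (insert w s) := by
    intro a ha b hb hab
    rcases ha with rfl | ha <;> rcases hb with rfl | hb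
    · exact absurd rfl hab
    · exact hw b hb (fun h => hab h.symm)
    · exact (hw a ha (fun h => hab h)).symm
    · exact hs.1 ha hb hab
  have := hs.2 _ hcl (Set.subset_insert w s)
  rw [this]; exact Set.mem_insert w s

section
variable {n m : ℕ}

lemma maxClique_encH (hn : n = 4 + 3 * m) (x : Fin 4 × (Fin m → Fin 3)) :
    MaxClique (Hmm n) (encH n m x) := by
  have hx1 : (x.1 : ℕ) < 4 := x.1.isLt
  constructor
  · intro v hv w hw hvw
    rw [Hmm_adj]
    intro heq
    rcases hv with h1 | ⟨p, hp⟩ <;> rcases hw with h2 | ⟨q, hq⟩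
    · exact hvw (Fin.ext (h1.trans h2.symm))
    · have hq3 : ((x.2 q : ℕ)) < 3 := (x.2 q).isLt
      simp only [part] at heq; split_ifs at heq <;> omega
    · have hp3 : ((x.2 p : ℕ)) < 3 := (x.2 p).isLt
      simp only [part] at heq; split_ifs at heq <;> omega
    · have hp3 : ((x.2 p : ℕ)) < 3 := (x.2 p).isLt
      have hq3 : ((x.2 q : ℕ)) < 3 := (x.2 q).isLt
      simp only [part] at heq; split_ifs at heq <;> try omega
      have hpq : p = q := Fin.ext (by omega)
      subst hpq
      exact hvw (Fin.ext (by omega))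
  · intro t ht hsub
    refine Set.Subset.antisymm hsub (fun w hw => ?_)
    by_cases hw4 : (w : ℕ) < 4
    · have hu : (⟨(x.1 : ℕ), by omega⟩ : Fin n) ∈ encH n m x := Or.inl rfl
      by_cases hwe : w = ⟨(x.1 : ℕ), by omega⟩
      · exact Or.inl (by rw [hwe])
      · have := ht (hsub hu) hw (fun h => hwe h.symm)
        rw [Hmm_adj] at this
        exact absurd (by simp only [part]; split_ifs <;> omega) this
    · have hplt : ((w : ℕ) - 4) / 3 < m := by have := w.isLt; omega
      set p : Fin m := ⟨((w : ℕ) - 4) / 3, hplt⟩ with hp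
      have hg3 : ((x.2 p : ℕ)) < 3 := (x.2 p).isLt
      have hu : (⟨4 + 3 * (p : ℕ) + (x.2 p : ℕ), by omega⟩ : Fin n) ∈ encH n m x :=
        Or.inr ⟨p, rfl⟩
      by_cases hwe : w = ⟨4 + 3 * (p : ℕ) + (x.2 p : ℕ), by omega⟩
      · exact Or.inr ⟨p, by rw [hwe]⟩
      · have := ht (hsub hu) hw (fun h => hwe h.symm)
        rw [Hmm_adj] at this
        refine absurd ?_ this
        simp only [part, hp]; split_ifs <;> omega

lemma encH_inj (hn : n = 4 + 3 * m) : Function.Injective (encH n m) := by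
  intro x y hxy
  have hx1 : (x.1 : ℕ) < 4 := x.1.isLt
  have hy1 : (y.1 : ℕ) < 4 := y.1.isLt
  have h1 : (⟨(x.1 : ℕ), by omega⟩ : Fin n) ∈ encH n m y := by
    rw [← hxy]; exact Or.inl rfl
  have hx1y : (x.1 : ℕ) = (y.1 : ℕ) := by
    rcases h1 with h | ⟨q, hq⟩
    · exact h
    · have := (y.2 q).isLt; simp at hq; omega
  have h2 : ∀ p : Fin m, x.2 p = y.2 p := by
    intro p
    have hm : (⟨4 + 3 * (p : ℕ) + (x.2 p : ℕ), by have := (x.2 p).isLt; omega⟩ : Fin n)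
        ∈ encH n m y := by rw [← hxy]; exact Or.inr ⟨p, rfl⟩
    have hg3 : ((x.2 p : ℕ)) < 3 := (x.2 p).isLt
    rcases hm with h | ⟨q, hq⟩
    · simp at h; omega
    · simp at hq
      have hq3 : ((y.2 q : ℕ)) < 3 := (y.2 q).isLt
      have : p = q := Fin.ext (by omega)
      subst this
      exact Fin.ext (by omega)
  exact Prod.ext (Fin.ext hx1y) (funext h2)

lemma encH_surj (hn : n = 4 + 3 * m) (s : Set (Fin n)) (hs : MaxClique (Hmm n) s) :
    ∃ x, s = encH n m x := by
  -- unique element in each part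
  have huniq : ∀ v ∈ s, ∀ w ∈ s, part n v = part n w → v = w := by
    intro v hv w hw hp
    by_contra hne
    exact (hs.1 hv hw hne) hp
  -- element of part 0
  have hex0 : ∃ v ∈ s, (v : ℕ) < 4 := by
    by_contra hno
    push_neg at hno
    have h0 : (⟨0, by omega⟩ : Fin n) ∈ s := by
      refine mem_of_adj_all hs _ (fun v hv hne => ?_)
      rw [Hmm_adj]
      have := hno v hv
      simp only [part]; split_ifs <;> omega
    have := hno _ h0
    simp at this
  -- element of each triple part
  have hexp : ∀ p : Fin m, ∃ v, v ∈ s ∧ 4 ≤ (v : ℕ) ∧ ((v : ℕ) - 4) / 3 = (p : ℕ) := by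
    intro p
    by_contra hno
    push_neg at hno
    have hlt : 4 + 3 * (p : ℕ) < n := by have := p.isLt; omega
    set w : Fin n := ⟨4 + 3 * (p : ℕ), hlt⟩ with hwdef
    have hwval : (w : ℕ) = 4 + 3 * (p : ℕ) := rfl
    have hw : w ∈ s := by
      refine mem_of_adj_all hs _ (fun v hv hne => ?_)
      rw [Hmm_adj]
      intro heq
      rcases Nat.lt_or_ge (v : ℕ) 4 with h4 | h4
      · simp only [part] at heq; split_ifs at heq <;> omega
      · have := hno v hv h4
        simp only [part] at heq; split_ifs at heq <;> omega
    exact hno w hw (by omega) (by omega)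
  obtain ⟨v0, hv0s, hv04⟩ := hex0
  choose f hfs hf4 hfp using hexp
  refine ⟨(⟨(v0 : ℕ), hv04⟩, fun p => ⟨((f p : ℕ) - 4) % 3, Nat.mod_lt _ (by norm_num)⟩), ?_⟩
  ext v
  constructor
  · intro hv
    by_cases hv4 : (v : ℕ) < 4
    · left
      have : v = v0 := huniq v hv v0 hv0s (by simp only [part]; split_ifs <;> omega)
      rw [this]
    · have hplt : ((v : ℕ) - 4) / 3 < m := by have := v.isLt; omega
      set p : Fin m := ⟨((v : ℕ) - 4) / 3, hplt⟩ with hpdef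
      have : v = f p := by
        refine huniq v hv (f p) (hfs p) ?_
        have h1 := hf4 p; have h2 := hfp p
        have hp' : (p : ℕ) = ((v : ℕ) - 4) / 3 := rfl
        simp only [part]; split_ifs <;> omega
      right
      refine ⟨p, ?_⟩
      have h1 := hf4 p; have h2 := hfp p
      have hp' : (p : ℕ) = ((v : ℕ) - 4) / 3 := rfl
      rw [this]
      show (f p : ℕ) = 4 + 3 * (p : ℕ) + ((f p : ℕ) - 4) % 3
      omega
  · intro hv
    rcases hv with h | ⟨p, hp⟩
    · have : v = v0 := Fin.ext (by simpa using h)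
      rw [this]; exact hv0s
    · have h1 := hf4 p; have h2 := hfp p
      have : v = f p := Fin.ext (by simp at hp; omega)
      rw [this]; exact hfs p

end
end Aux
section AuxG
variable {n m : ℕ}

lemma maxClique_encG (hn : n = 4 + 3 * m) (x : Fin 4 × (Fin m → Fin 3)) :
    MaxClique (Gmm n) (encG n m x) := by
  have hx1 : (x.1 : ℕ) < 4 := x.1.isLt
  constructor
  · intro v hv w hw hvw
    rw [Gmm_adj]
    refine ⟨hvw, ?_⟩
    have hvne : (v : ℕ) ≠ (w : ℕ) := fun h => hvw (Fin.ext h)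
    rcases hv with h1 | h1 | ⟨p, hp⟩ <;> rcases hw with h2 | h2 | ⟨q, hq⟩
    · omega
    · exact Or.inr ⟨by omega, by omega, Or.inl (by omega)⟩
    · have := (x.2 q).isLt
      exact Or.inl (by simp only [part]; split_ifs <;> omega)
    · exact Or.inr ⟨by omega, by omega, Or.inr (by omega)⟩
    · omega
    · have := (x.2 q).isLt
      exact Or.inl (by simp only [part]; split_ifs <;> omega)
    · have := (x.2 p).isLt
      exact Or.inl (by simp only [part]; split_ifs <;> omega)
    · have := (x.2 p).isLt
      exact Or.inl (by simp only [part]; split_ifs <;> omega)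
    · have h3 := (x.2 p).isLt
      have h4 := (x.2 q).isLt
      refine Or.inl ?_
      have hpq : (p : ℕ) ≠ (q : ℕ) := by
        intro h
        have : p = q := Fin.ext h
        subst this; omega
      simp only [part]; split_ifs <;> omega
  · intro t ht hsub
    refine Set.Subset.antisymm hsub (fun w hw => ?_)
    by_cases hw4 : (w : ℕ) < 4
    · set u1 : Fin n := ⟨(x.1 : ℕ), by omega⟩ with hu1
      set u2 : Fin n := ⟨((x.1 : ℕ) + 1) % 4, by omega⟩ with hu2
      have hu1v : (u1 : ℕ) = (x.1 : ℕ) := rfl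
      have hu2v : (u2 : ℕ) = ((x.1 : ℕ) + 1) % 4 := rfl
      have hm1 : u1 ∈ encG n m x := Or.inl rfl
      have hm2 : u2 ∈ encG n m x := Or.inr (Or.inl rfl)
      by_cases he1 : w = u1
      · exact Or.inl (by rw [he1])
      by_cases he2 : w = u2
      · exact Or.inr (Or.inl (by rw [he2]))
      have ha1 := ht (hsub hm1) hw (fun h => he1 h.symm)
      have ha2 := ht (hsub hm2) hw (fun h => he2 h.symm)
      rw [Gmm_adj] at ha1 ha2
      have hc1 : cyc4 (u1 : ℕ) (w : ℕ) := by
        rcases ha1.2 with h | h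
        · exact absurd (by simp only [part]; split_ifs <;> omega) h
        · exact h.2.2
      have hc2 : cyc4 (u2 : ℕ) (w : ℕ) := by
        rcases ha2.2 with h | h
        · exact absurd (by simp only [part]; split_ifs <;> omega) h
        · exact h.2.2
      have hne1 : (w : ℕ) ≠ (u1 : ℕ) := fun h => he1 (Fin.ext h)
      have hne2 : (w : ℕ) ≠ (u2 : ℕ) := fun h => he2 (Fin.ext h)
      unfold cyc4 at hc1 hc2
      omega
    · have hplt : ((w : ℕ) - 4) / 3 < m := by have := w.isLt; omega
      set p : Fin m := ⟨((w : ℕ) - 4) / 3, hplt⟩ with hp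
      have hpv : (p : ℕ) = ((w : ℕ) - 4) / 3 := rfl
      have hg3 : ((x.2 p : ℕ)) < 3 := (x.2 p).isLt
      set u : Fin n := ⟨4 + 3 * (p : ℕ) + (x.2 p : ℕ), by omega⟩ with hudef
      have huv : (u : ℕ) = 4 + 3 * (p : ℕ) + (x.2 p : ℕ) := rfl
      have hu : u ∈ encG n m x := Or.inr (Or.inr ⟨p, rfl⟩)
      by_cases hwe : w = u
      · exact Or.inr (Or.inr ⟨p, by rw [hwe]⟩)
      · have hadj := ht (hsub hu) hw (fun h => hwe h.symm)
        rw [Gmm_adj] at hadj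
        rcases hadj.2 with h | h
        · exact absurd (by simp only [part]; split_ifs <;> omega) h
        · omega

lemma encG_inj (hn : n = 4 + 3 * m) : Function.Injective (encG n m) := by
  intro x y hxy
  have hx1 : (x.1 : ℕ) < 4 := x.1.isLt
  have hy1 : (y.1 : ℕ) < 4 := y.1.isLt
  have h1 : (⟨(x.1 : ℕ), by omega⟩ : Fin n) ∈ encG n m y := by rw [← hxy]; exact Or.inl rfl
  have h2 : (⟨((x.1 : ℕ) + 1) % 4, by omega⟩ : Fin n) ∈ encG n m y := by
    rw [← hxy]; exact Or.inr (Or.inl rfl)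
  have hx1y : (x.1 : ℕ) = (y.1 : ℕ) := by
    rcases h1 with h | h | ⟨q, hq⟩
    · exact h
    · rcases h2 with h' | h' | ⟨q, hq⟩
      · simp only [] at h h'; omega
      · simp only [] at h h'; omega
      · have := (y.2 q).isLt; simp only [] at hq; omega
    · have := (y.2 q).isLt; simp only [] at hq; omega
  have h2 : ∀ p : Fin m, x.2 p = y.2 p := by
    intro p
    have hg3 : ((x.2 p : ℕ)) < 3 := (x.2 p).isLt
    have hm : (⟨4 + 3 * (p : ℕ) + (x.2 p : ℕ), by have := p.isLt; omega⟩ : Fin n)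
        ∈ encG n m y := by rw [← hxy]; exact Or.inr (Or.inr ⟨p, rfl⟩)
    rcases hm with h | h | ⟨q, hq⟩
    · simp only [] at h; omega
    · simp only [] at h; omega
    · simp only [] at hq
      have hq3 : ((y.2 q : ℕ)) < 3 := (y.2 q).isLt
      have : p = q := Fin.ext (by omega)
      subst this
      exact Fin.ext (by omega)
  exact Prod.ext (Fin.ext hx1y) (funext h2)

lemma encG_surj (hn : n = 4 + 3 * m) (s : Set (Fin n)) (hs : MaxClique (Gmm n) s) :
    ∃ x, s = encG n m x := by
  have hadj : ∀ v ∈ s, ∀ w ∈ s, v ≠ w → (Gmm n).Adj v w := fun v hv w hw => hs.1 hv hw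
  -- unique element in each triple part
  have huniqT : ∀ v ∈ s, ∀ w ∈ s, 4 ≤ (v : ℕ) → 4 ≤ (w : ℕ) →
      ((v : ℕ) - 4) / 3 = ((w : ℕ) - 4) / 3 → v = w := by
    intro v hv w hw h4v h4w hp
    by_contra hne
    have := hadj v hv w hw hne
    rw [Gmm_adj] at this
    rcases this.2 with h | h
    · exact h (by simp only [part]; split_ifs <;> omega)
    · omega
  -- a first element of part 0
  have hex0 : ∃ v ∈ s, (v : ℕ) < 4 := by
    by_contra hno
    push_neg at hno
    have h0 : (⟨0, by omega⟩ : Fin n) ∈ s := by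
      refine mem_of_adj_all hs _ (fun v hv hne => ?_)
      have := hno v hv
      rw [Gmm_adj]
      exact ⟨fun h => hne h.symm, Or.inl (by simp only [part]; split_ifs <;> omega)⟩
    have := hno _ h0
    simp at this
  obtain ⟨v0, hv0s, hv04⟩ := hex0
  -- a second element of part 0
  have hex1 : ∃ v1 ∈ s, v1 ≠ v0 ∧ (v1 : ℕ) < 4 := by
    by_contra hno
    push_neg at hno
    set w : Fin n := ⟨((v0 : ℕ) + 1) % 4, by omega⟩ with hwdef
    have hwval : (w : ℕ) = ((v0 : ℕ) + 1) % 4 := rfl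
    have hwv0 : w ≠ v0 := fun h => by rw [h] at hwval; omega
    have hws : w ∈ s := by
      refine mem_of_adj_all hs _ (fun v hv hne => ?_)
      rw [Gmm_adj]
      refine ⟨fun h => hne h.symm, ?_⟩
      by_cases hv4 : (v : ℕ) < 4
      · have hvv0 : v = v0 := by
          by_contra hne'
          exact absurd (hno v hv hne') (by omega)
        subst hvv0
        exact Or.inr ⟨by omega, by omega, Or.inr (by omega)⟩
      · exact Or.inl (by simp only [part]; split_ifs <;> omega)
    exact absurd (hno w hws hwv0) (by omega)
  obtain ⟨v1, hv1s, hv1ne, hv14⟩ := hex1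
  -- v0 and v1 are cyc4-adjacent; orient the edge
  have hcyc : cyc4 (v0 : ℕ) (v1 : ℕ) := by
    have := hadj v0 hv0s v1 hv1s (fun h => hv1ne h.symm)
    rw [Gmm_adj] at this
    rcases this.2 with h | h
    · exact absurd (by simp only [part]; split_ifs <;> omega) h
    · exact h.2.2
  have hor : ∃ a ∈ s, ∃ b ∈ s, (a : ℕ) < 4 ∧ (b : ℕ) < 4 ∧ (b : ℕ) = ((a : ℕ) + 1) % 4 := by
    unfold cyc4 at hcyc
    rcases hcyc with h | h
    · exact ⟨v0, hv0s, v1, hv1s, hv04, hv14, by omega⟩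
    · exact ⟨v1, hv1s, v0, hv0s, hv14, hv04, by omega⟩
  obtain ⟨a, has, b, hbs, ha4, hb4, hab⟩ := hor
  have habne : a ≠ b := fun h => by rw [← h] at hab; omega
  -- no third element of part 0
  have hno3 : ∀ v ∈ s, (v : ℕ) < 4 → v = a ∨ v = b := by
    intro v hv hv4
    by_contra hne
    push_neg at hne
    have hc1 : cyc4 (v : ℕ) (a : ℕ) := by
      have := hadj v hv a has hne.1
      rw [Gmm_adj] at this
      rcases this.2 with h | h
      · exact absurd (by simp only [part]; split_ifs <;> omega) h
      · exact h.2.2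
    have hc2 : cyc4 (v : ℕ) (b : ℕ) := by
      have := hadj v hv b hbs hne.2
      rw [Gmm_adj] at this
      rcases this.2 with h | h
      · exact absurd (by simp only [part]; split_ifs <;> omega) h
      · exact h.2.2
    have hna : (v : ℕ) ≠ (a : ℕ) := fun h => hne.1 (Fin.ext h)
    have hnb : (v : ℕ) ≠ (b : ℕ) := fun h => hne.2 (Fin.ext h)
    unfold cyc4 at hc1 hc2
    omega
  -- element of each triple part
  have hexp : ∀ p : Fin m, ∃ v, v ∈ s ∧ 4 ≤ (v : ℕ) ∧ ((v : ℕ) - 4) / 3 = (p : ℕ) := by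
    intro p
    by_contra hno
    push_neg at hno
    have hlt : 4 + 3 * (p : ℕ) < n := by have := p.isLt; omega
    set w : Fin n := ⟨4 + 3 * (p : ℕ), hlt⟩ with hwdef
    have hwval : (w : ℕ) = 4 + 3 * (p : ℕ) := rfl
    have hw : w ∈ s := by
      refine mem_of_adj_all hs _ (fun v hv hne => ?_)
      rw [Gmm_adj]
      refine ⟨fun h => hne h.symm, Or.inl ?_⟩
      intro heq
      rcases Nat.lt_or_ge (v : ℕ) 4 with h4 | h4
      · simp only [part] at heq; split_ifs at heq <;> omega
      · have := hno v hv h4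
        simp only [part] at heq; split_ifs at heq <;> omega
    exact hno w hw (by omega) (by omega)
  choose f hfs hf4 hfp using hexp
  refine ⟨(⟨(a : ℕ), ha4⟩, fun p => ⟨((f p : ℕ) - 4) % 3, Nat.mod_lt _ (by norm_num)⟩), ?_⟩
  ext v
  constructor
  · intro hv
    by_cases hv4 : (v : ℕ) < 4
    · rcases hno3 v hv hv4 with rfl | rfl
      · exact Or.inl rfl
      · exact Or.inr (Or.inl hab)
    · have hplt : ((v : ℕ) - 4) / 3 < m := by have := v.isLt; omega
      set p : Fin m := ⟨((v : ℕ) - 4) / 3, hplt⟩ with hpdef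
      have hp' : (p : ℕ) = ((v : ℕ) - 4) / 3 := rfl
      have h1 := hf4 p; have h2 := hfp p
      have : v = f p := huniqT v hv (f p) (hfs p) (by omega) h1 (by omega)
      refine Or.inr (Or.inr ⟨p, ?_⟩)
      rw [this]
      show (f p : ℕ) = 4 + 3 * (p : ℕ) + ((f p : ℕ) - 4) % 3
      omega
  · intro hv
    rcases hv with h | h | ⟨p, hp⟩
    · have : v = a := Fin.ext (by simpa using h)
      rw [this]; exact has
    · have : v = b := Fin.ext (by simp at h; omega)
      rw [this]; exact hbs
    · have h1 := hf4 p; have h2 := hfp p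
      have : v = f p := Fin.ext (by simp at hp; omega)
      rw [this]; exact hfs p

end AuxG
lemma four_indep (a b c d : ℕ)
  (p01 : (a < 4 ∧ b < 4) ∨ (4 ≤ a ∧ 4 ≤ b ∧ (a - 4)/3 = (b - 4)/3))
  (p02 : (a < 4 ∧ c < 4) ∨ (4 ≤ a ∧ 4 ≤ c ∧ (a - 4)/3 = (c - 4)/3))
  (p03 : (a < 4 ∧ d < 4) ∨ (4 ≤ a ∧ 4 ≤ d ∧ (a - 4)/3 = (d - 4)/3))
  (d01 : a ≠ b) (d02 : a ≠ c) (d03 : a ≠ d)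
  (d12 : b ≠ c) (d13 : b ≠ d) (d23 : c ≠ d)
  (c01 : a < 4 → b < 4 → ¬(a + 1) % 4 = b % 4 ∧ ¬(b + 1) % 4 = a % 4)
  (c02 : a < 4 → c < 4 → ¬(a + 1) % 4 = c % 4 ∧ ¬(c + 1) % 4 = a % 4)
  (c03 : a < 4 → d < 4 → ¬(a + 1) % 4 = d % 4 ∧ ¬(d + 1) % 4 = a % 4)
  (c12 : b < 4 → c < 4 → ¬(b + 1) % 4 = c % 4 ∧ ¬(c + 1) % 4 = b % 4)
  (c13 : b < 4 → d < 4 → ¬(b + 1) % 4 = d % 4 ∧ ¬(d + 1) % 4 = b % 4)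
  (c23 : c < 4 → d < 4 → ¬(c + 1) % 4 = d % 4 ∧ ¬(d + 1) % 4 = c % 4)
  : False := by
  rcases p01 with ⟨ha, hb⟩ | ⟨ha, hb, q1⟩
  · rcases p02 with ⟨_, hc⟩ | ⟨ha', _⟩
    swap
    · exact absurd ha (not_lt.mpr ha')
    rcases p03 with ⟨_, hd⟩ | ⟨ha', _⟩
    swap
    · exact absurd ha (not_lt.mpr ha')
    have h1 := c01 ha hb
    have h2 := c02 ha hc
    have h3 := c03 ha hd
    have h4 := c12 hb hc
    have h5 := c13 hb hd
    have h6 := c23 hc hd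
    clear c01 c02 c03 c12 c13 c23
    interval_cases a <;> interval_cases b <;> interval_cases c <;> interval_cases d <;> omega
  · rcases p02 with ⟨ha', _⟩ | ⟨_, hc, q2⟩
    · exact absurd ha' (not_lt.mpr ha)
    rcases p03 with ⟨ha', _⟩ | ⟨_, hd, q3⟩
    · exact absurd ha' (not_lt.mpr ha)
    clear c01 c02 c03 c12 c13 c23
    omega

lemma card_aux (m : ℕ) : Nat.card (Fin 4 × (Fin m → Fin 3)) = 4 * 3 ^ m := by
  simp [Nat.card_eq_fintype_card]

set_option maxHeartbeats 1000000 in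
theorem stmt_12 (n : ℕ) (h4 : 4 ≤ n) (h3 : n % 3 = 1) :
    ¬ Nonempty (Hmm n ≃g Gmm n) ∧
    numMaxCliques (Hmm n) = 4 * 3 ^ ((n - 4) / 3) ∧
    numMaxCliques (Gmm n) = 4 * 3 ^ ((n - 4) / 3) := by
  obtain ⟨m, hn⟩ : ∃ m, n = 4 + 3 * m := ⟨(n - 4) / 3, by omega⟩
  have hm : (n - 4) / 3 = m := by omega
  have part_eq_iff : ∀ v w : Fin n, part n v = part n w ↔
      (((v : ℕ) < 4 ∧ (w : ℕ) < 4) ∨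
        (4 ≤ (v : ℕ) ∧ 4 ≤ (w : ℕ) ∧ ((v : ℕ) - 4) / 3 = ((w : ℕ) - 4) / 3)) := by
    intro v w; simp only [part]; split_ifs <;> first | omega | (rw [false_iff]; omega) | (rw [iff_false]; omega)
  refine ⟨?_, ?_, ?_⟩
  · rintro ⟨e⟩
    have nadj : ∀ v w : Fin n, (v : ℕ) < 4 → (w : ℕ) < 4 → v ≠ w →
        part n (e v) = part n (e w) ∧
        ((e v : Fin n) : ℕ) ≠ ((e w : Fin n) : ℕ) ∧
        (((e v : Fin n) : ℕ) < 4 → ((e w : Fin n) : ℕ) < 4 →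
          ¬ cyc4 ((e v : Fin n) : ℕ) ((e w : Fin n) : ℕ)) := by
      intro v w hv hw hvw
      have hene : (e v : Fin n) ≠ e w := fun h => hvw (e.toEquiv.injective h)
      have hnadj : ¬ (Hmm n).Adj v w := by
        rw [Hmm_adj, not_not, part_eq_iff]
        exact Or.inl ⟨hv, hw⟩
      have hG : ¬ (Gmm n).Adj (e v) (e w) := by
        rw [e.map_adj_iff]; exact hnadj
      rw [Gmm_adj] at hG
      push_neg at hG
      have h := hG hene
      exact ⟨h.1, fun hh => hene (Fin.ext hh), h.2⟩
    have h0 : (0 : ℕ) < n := by omega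
    have h1 : (1 : ℕ) < n := by omega
    have h2 : (2 : ℕ) < n := by omega
    have h3' : (3 : ℕ) < n := by omega
    obtain ⟨p01, d01, c01⟩ := nadj ⟨0, h0⟩ ⟨1, h1⟩ (by norm_num) (by norm_num) (by simp)
    obtain ⟨p02, d02, c02⟩ := nadj ⟨0, h0⟩ ⟨2, h2⟩ (by norm_num) (by norm_num) (by simp)
    obtain ⟨p03, d03, c03⟩ := nadj ⟨0, h0⟩ ⟨3, h3'⟩ (by norm_num) (by norm_num) (by simp)
    obtain ⟨p12, d12, c12⟩ := nadj ⟨1, h1⟩ ⟨2, h2⟩ (by norm_num) (by norm_num) (by simp)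
    obtain ⟨p13, d13, c13⟩ := nadj ⟨1, h1⟩ ⟨3, h3'⟩ (by norm_num) (by norm_num) (by simp)
    obtain ⟨p23, d23, c23⟩ := nadj ⟨2, h2⟩ ⟨3, h3'⟩ (by norm_num) (by norm_num) (by simp)
    rw [part_eq_iff] at p01 p02 p03 p12 p13 p23
    simp only [cyc4, not_or] at c01 c02 c03 c12 c13 c23
    exact four_indep _ _ _ _ p01 p02 p03 d01 d02 d03 d12 d13 d23 c01 c02 c03 c12 c13 c23
  · rw [numMaxCliques_eq_of_bij (encH n m) (maxClique_encH hn) (encH_inj hn) (encH_surj hn),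
      card_aux, hm]
  · rw [numMaxCliques_eq_of_bij (encG n m) (maxClique_encG hn) (encG_inj hn) (encG_surj hn),
      card_aux, hm]
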